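/- Fix n ≥ 1 and 0 ≤ k ≤ n−1. Let π and σ be two independent uniformly random permutations of [n], write E(π) = {(π_i, π_{i+1}) : 1 ≤ i ≤ n−1} and similarly E(σ), and let Z = |E(π) ∩ E(σ)|. Then 𝔼[C(Z, k)] = ((n−k)/n) · (1/k!), where C(Z,k) is the binomial coefficient. Equivalently, for any fixed permutation π and any k-element subset S ⊆ E(π), the probability that S ⊆ E(σ) for uniform σ is (n−k)!/n!. -/

import Mathlib

/-- The set `E(π) = {(π_i, π_{i+1}) : 1 ≤ i ≤ n−1}` of `n−1` consecutive directed edges of a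
permutation `π` of `Fin n` in one-line notation. -/
def edgeFinset (n : ℕ) (π : Equiv.Perm (Fin n)) : Finset (Fin n × Fin n) :=
  Finset.image (fun i : Fin (n - 1) =>
    (π ⟨i.1, by have := i.isLt; omega⟩, π ⟨i.1 + 1, by have := i.isLt; omega⟩)) Finset.univ


def Cst (n : ℕ) (T : Finset ℕ) (f : Fin n → Fin n) : Prop :=
  ∀ i ∈ T, ∀ h : i + 1 < n, (f ⟨i + 1, h⟩).val = (f ⟨i, Nat.lt_of_succ_lt h⟩).val + 1

instance (n T) (f : Fin n → Fin n) : Decidable (Cst n T f) := by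
  unfold Cst; infer_instance

def sk (t j : ℕ) : ℕ := if j < t + 1 then j else j + 1
def usk (t j : ℕ) : ℕ := if j < t + 1 then j else j - 1
def dv (b v : ℕ) : ℕ := if v < b then v else v - 1
def iv (u v : ℕ) : ℕ := if v ≤ u then v else v + 1

lemma sk_lt {n t j : ℕ} (h : t + 1 < n) (hj : j < n - 1) : sk t j < n := by
  unfold sk; split_ifs <;> omega
lemma sk_ne {t j : ℕ} : sk t j ≠ t + 1 := by unfold sk; split_ifs <;> omega
lemma sk_inj {t j1 j2 : ℕ} (h : sk t j1 = sk t j2) : j1 = j2 := by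
  unfold sk at h; split_ifs at h <;> omega
lemma usk_lt {n t j : ℕ} (h : t + 1 < n) (hj : j < n) (hne : j ≠ t + 1) : usk t j < n - 1 := by
  unfold usk; split_ifs <;> omega
lemma usk_inj {t j1 j2 : ℕ} (h1 : j1 ≠ t + 1) (h2 : j2 ≠ t + 1) (h : usk t j1 = usk t j2) :
    j1 = j2 := by unfold usk at h; split_ifs at h <;> omega
lemma usk_sk {t j : ℕ} : usk t (sk t j) = j := by
  unfold sk usk; split_ifs <;> omega
lemma sk_usk {t j : ℕ} (h : j ≠ t + 1) : sk t (usk t j) = j := by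
  unfold sk usk; split_ifs <;> omega
lemma dv_lt {n b v : ℕ} (hb : b < n) (hv : v < n) (h2 : 2 ≤ n) : dv b v < n - 1 := by
  unfold dv; split_ifs <;> omega
lemma dv_inj {b v1 v2 : ℕ} (h1 : v1 ≠ b) (h2 : v2 ≠ b) (h : dv b v1 = dv b v2) : v1 = v2 := by
  unfold dv at h; split_ifs at h <;> omega
lemma dv_succ {b v : ℕ} (h1 : v ≠ b) (h2 : v + 1 ≠ b) : dv b (v + 1) = dv b v + 1 := by
  unfold dv; split_ifs <;> omega
lemma iv_lt {n u v : ℕ} (hu : u < n - 1) (hv : v < n - 1) : iv u v < n := by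
  unfold iv; split_ifs <;> omega
lemma iv_ne {u v : ℕ} : iv u v ≠ u + 1 := by unfold iv; split_ifs <;> omega
lemma iv_inj {u v1 v2 : ℕ} (h : iv u v1 = iv u v2) : v1 = v2 := by
  unfold iv at h; split_ifs at h <;> omega
lemma iv_succ {u v : ℕ} (h : v ≠ u) : iv u (v + 1) = iv u v + 1 := by
  unfold iv; split_ifs <;> omega
lemma iv_self {u : ℕ} : iv u u = u := by unfold iv; split_ifs <;> omega
lemma iv_dv {b v : ℕ} (hb : 1 ≤ b) (h : v ≠ b) : iv (b - 1) (dv b v) = v := by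
  unfold iv dv; split_ifs <;> omega
lemma dv_iv {u v : ℕ} : dv (u + 1) (iv u v) = v := by
  unfold dv iv; split_ifs <;> omega

/-- delete position `t+1` and value `f (t+1)` -/
def delF (n t : ℕ) (h : t + 1 < n) (f : Fin n → Fin n) : Fin (n - 1) → Fin (n - 1) :=
  fun j => ⟨dv (f ⟨t + 1, h⟩).val (f ⟨sk t j.val, sk_lt h j.isLt⟩).val,
    dv_lt (f _).isLt (f _).isLt (by omega)⟩

/-- insert value `f' t + 1` at position `t+1` -/
def insF (n t : ℕ) (h : t + 1 < n) (f' : Fin (n - 1) → Fin (n - 1)) : Fin n → Fin n :=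
  fun j =>
    if hj : j.val = t + 1 then ⟨(f' ⟨t, by omega⟩).val + 1, by
      have := (f' (⟨t, by omega⟩ : Fin (n - 1))).isLt; omega⟩
    else ⟨iv (f' ⟨t, by omega⟩).val (f' ⟨usk t j.val, usk_lt h j.isLt hj⟩).val,
      iv_lt (f' _).isLt (f' _).isLt⟩

lemma delF_val (n t : ℕ) (h : t + 1 < n) (f : Fin n → Fin n) (j : Fin (n - 1)) (p : Fin n)
    (hp : p.val = sk t j.val) :
    (delF n t h f j).val = dv (f ⟨t + 1, h⟩).val (f p).val := by
  have hq : p = ⟨sk t j.val, sk_lt h j.isLt⟩ := Fin.ext hp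
  rw [hq]; rfl

lemma insF_val_eq (n t : ℕ) (h : t + 1 < n) (f' : Fin (n - 1) → Fin (n - 1)) (j : Fin n)
    (hj : j.val = t + 1) (r : Fin (n - 1)) (hr : r.val = t) :
    (insF n t h f' j).val = (f' r).val + 1 := by
  have hr' : r = ⟨t, by omega⟩ := Fin.ext hr
  unfold insF; rw [dif_pos hj, hr']

lemma insF_val_ne (n t : ℕ) (h : t + 1 < n) (f' : Fin (n - 1) → Fin (n - 1)) (j : Fin n)
    (hj : j.val ≠ t + 1) (r : Fin (n - 1)) (hr : r.val = t)
    (q : Fin (n - 1)) (hq : q.val = usk t j.val) :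
    (insF n t h f' j).val = iv (f' r).val (f' q).val := by
  have hq' : q = ⟨usk t j.val, usk_lt h j.isLt hj⟩ := Fin.ext hq
  have hr' : r = ⟨t, by omega⟩ := Fin.ext hr
  unfold insF; rw [dif_neg hj, hq', hr']

lemma cardInjFuns (n : ℕ) :
    (Finset.univ.filter (fun f : Fin n → Fin n => Function.Injective f)).card
      = n.factorial := by
  rw [← Fintype.card_subtype]
  rw [Fintype.card_of_bijective (f := fun f : {f : Fin n → Fin n // Function.Injective f} =>
    (⟨f.1, f.2⟩ : Fin n ↪ Fin n)) ⟨fun a b h => Subtype.ext (congrArg (fun e => e.toFun) h),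
      fun e => ⟨⟨e.1, e.2⟩, rfl⟩⟩]
  rw [Fintype.card_embedding_eq, Fintype.card_fin, Nat.descFactorial_self]

lemma countInj (k : ℕ) : ∀ (n : ℕ) (T : Finset ℕ), (∀ i ∈ T, i + 1 < n) → T.card = k →
    (Finset.univ.filter (fun f : Fin n → Fin n => Function.Injective f ∧ Cst n T f)).card
      = (n - k).factorial := by
  induction k with
  | zero =>
    intro n T hT hcard
    rw [Finset.card_eq_zero] at hcard
    subst hcard
    simp only [Cst, Finset.notMem_empty, false_implies, implies_true, and_true, Nat.sub_zero]
    exact cardInjFuns n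
  | succ k ih =>
    intro n T hT hcard
    have hne : T.Nonempty := Finset.card_pos.mp (by omega)
    obtain ⟨t, htT, htmax⟩ : ∃ t ∈ T, ∀ i ∈ T, i ≤ t :=
      ⟨T.max' hne, T.max'_mem hne, fun i hi => T.le_max' i hi⟩
    have ht1 : t + 1 < n := hT t htT
    have htn1 : t < n - 1 := by omega
    have hT'card : (T.erase t).card = k := by
      rw [Finset.card_erase_of_mem htT, hcard]
      omega
    have hT'lt : ∀ i ∈ T.erase t, i + 1 < n - 1 := by
      intro i hi
      have h2 : i ≠ t := Finset.ne_of_mem_erase hi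
      have h3 : i ≤ t := htmax i (Finset.mem_of_mem_erase hi)
      omega
    have key := ih (n - 1) (T.erase t) hT'lt hT'card
    have hgoal : n - (k + 1) = n - 1 - k := by omega
    rw [hgoal, ← key]
    apply Finset.card_bij' (fun f _ => delF n t ht1 f) (fun f' _ => insF n t ht1 f')
    · -- forward maps into target
      intro f hf
      simp only [Finset.mem_filter, Finset.mem_univ, true_and] at hf ⊢
      obtain ⟨hinj, hcst⟩ := hf
      have hbt : (f ⟨t + 1, ht1⟩).val = (f ⟨t, by omega⟩).val + 1 := hcst t htT ht1
      constructor
      · intro j1 j2 he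
        have he' := congrArg Fin.val he
        rw [delF_val n t ht1 f j1 ⟨sk t j1.val, sk_lt ht1 j1.isLt⟩ rfl,
            delF_val n t ht1 f j2 ⟨sk t j2.val, sk_lt ht1 j2.isLt⟩ rfl] at he'
        have hv1 : (f ⟨sk t j1.val, sk_lt ht1 j1.isLt⟩).val ≠ (f ⟨t + 1, ht1⟩).val := by
          intro hc
          have := congrArg Fin.val (hinj (Fin.ext hc))
          exact absurd this sk_ne
        have hv2 : (f ⟨sk t j2.val, sk_lt ht1 j2.isLt⟩).val ≠ (f ⟨t + 1, ht1⟩).val := by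
          intro hc
          have := congrArg Fin.val (hinj (Fin.ext hc))
          exact absurd this sk_ne
        have := congrArg Fin.val (hinj (Fin.ext (dv_inj hv1 hv2 he')))
        exact Fin.ext (sk_inj this)
      · intro i hi h
        have hiT : i ∈ T := Finset.mem_of_mem_erase hi
        have hit : i < t := by
          have := htmax i hiT
          have := Finset.ne_of_mem_erase hi
          omega
        have hi1n : i + 1 < n := by omega
        have hin : i < n := by omega
        rw [delF_val n t ht1 f ⟨i + 1, h⟩ ⟨i + 1, hi1n⟩
              (by show i + 1 = sk t (i + 1); unfold sk; split_ifs <;> omega),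
            delF_val n t ht1 f ⟨i, by omega⟩ ⟨i, hin⟩
              (by show i = sk t i; unfold sk; split_ifs <;> omega)]
        have hc : (f ⟨i + 1, hi1n⟩).val = (f ⟨i, hin⟩).val + 1 := hcst i hiT hi1n
        have hne1 : (f ⟨i, hin⟩).val ≠ (f ⟨t + 1, ht1⟩).val := by
          intro hc'
          have := congrArg Fin.val (hinj (Fin.ext hc'))
          simp only at this; omega
        have hne2 : (f ⟨i + 1, hi1n⟩).val ≠ (f ⟨t + 1, ht1⟩).val := by
          intro hc'
          have := congrArg Fin.val (hinj (Fin.ext hc'))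
          simp only at this; omega
        rw [hc]
        exact dv_succ hne1 (by omega)
    · -- backward maps into source
      intro f' hf'
      simp only [Finset.mem_filter, Finset.mem_univ, true_and] at hf' ⊢
      obtain ⟨hinj, hcst⟩ := hf'
      constructor
      · intro j1 j2 he
        have he' := congrArg Fin.val he
        by_cases h1 : j1.val = t + 1 <;> by_cases h2 : j2.val = t + 1
        · exact Fin.ext (by omega)
        · rw [insF_val_eq n t ht1 f' j1 h1 ⟨t, htn1⟩ rfl,
              insF_val_ne n t ht1 f' j2 h2 ⟨t, htn1⟩ rfl
                ⟨usk t j2.val, usk_lt ht1 j2.isLt h2⟩ rfl] at he'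
          exact absurd he'.symm iv_ne
        · rw [insF_val_eq n t ht1 f' j2 h2 ⟨t, htn1⟩ rfl,
              insF_val_ne n t ht1 f' j1 h1 ⟨t, htn1⟩ rfl
                ⟨usk t j1.val, usk_lt ht1 j1.isLt h1⟩ rfl] at he'
          exact absurd he' iv_ne
        · rw [insF_val_ne n t ht1 f' j1 h1 ⟨t, htn1⟩ rfl
                ⟨usk t j1.val, usk_lt ht1 j1.isLt h1⟩ rfl,
              insF_val_ne n t ht1 f' j2 h2 ⟨t, htn1⟩ rfl
                ⟨usk t j2.val, usk_lt ht1 j2.isLt h2⟩ rfl] at he'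
          have := congrArg Fin.val (hinj (Fin.ext (iv_inj he')))
          exact Fin.ext (usk_inj h1 h2 this)
      · intro i hiT h
        by_cases hit : i = t
        · rw [insF_val_eq n t ht1 f' ⟨i + 1, h⟩ (by show i + 1 = t + 1; omega) ⟨t, htn1⟩ rfl,
              insF_val_ne n t ht1 f' ⟨i, by omega⟩ (by show i ≠ t + 1; omega) ⟨t, htn1⟩ rfl
                ⟨t, htn1⟩ (by show t = usk t i; unfold usk; split_ifs <;> omega)]
          rw [iv_self]
        · have hlt : i < t := by have := htmax i hiT; omega
          have hi1m : i + 1 < n - 1 := by omega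
          have him : i < n - 1 := by omega
          rw [insF_val_ne n t ht1 f' ⟨i + 1, h⟩ (by show i + 1 ≠ t + 1; omega) ⟨t, htn1⟩ rfl
                ⟨i + 1, hi1m⟩ (by show i + 1 = usk t (i + 1); unfold usk; split_ifs <;> omega),
              insF_val_ne n t ht1 f' ⟨i, by omega⟩ (by show i ≠ t + 1; omega) ⟨t, htn1⟩ rfl
                ⟨i, him⟩ (by show i = usk t i; unfold usk; split_ifs <;> omega)]
          have hc : (f' ⟨i + 1, hi1m⟩).val = (f' ⟨i, him⟩).val + 1 :=
            hcst i (Finset.mem_erase_of_ne_of_mem hit hiT) hi1m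
          have hne1 : (f' ⟨i, him⟩).val ≠ (f' ⟨t, htn1⟩).val := by
            intro hc'
            have := congrArg Fin.val (hinj (Fin.ext hc'))
            simp only at this; omega
          rw [hc]
          exact iv_succ hne1
    · -- left inverse
      intro f hf
      simp only [Finset.mem_filter, Finset.mem_univ, true_and] at hf
      obtain ⟨hinj, hcst⟩ := hf
      have hbt : (f ⟨t + 1, ht1⟩).val = (f ⟨t, by omega⟩).val + 1 := hcst t htT ht1
      have hu : (delF n t ht1 f ⟨t, htn1⟩).val = (f ⟨t + 1, ht1⟩).val - 1 := by
        rw [delF_val n t ht1 f ⟨t, htn1⟩ ⟨t, by omega⟩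
          (by show t = sk t t; unfold sk; split_ifs <;> omega)]
        unfold dv; split_ifs <;> omega
      funext j
      apply Fin.ext
      by_cases hj : j.val = t + 1
      · rw [insF_val_eq n t ht1 (delF n t ht1 f) j hj ⟨t, htn1⟩ rfl, hu]
        have : j = ⟨t + 1, ht1⟩ := Fin.ext hj
        rw [this]; omega
      · rw [insF_val_ne n t ht1 (delF n t ht1 f) j hj ⟨t, htn1⟩ rfl
            ⟨usk t j.val, usk_lt ht1 j.isLt hj⟩ rfl]
        rw [delF_val n t ht1 f ⟨usk t j.val, usk_lt ht1 j.isLt hj⟩ j (sk_usk hj).symm, hu]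
        have hvne : (f j).val ≠ (f ⟨t + 1, ht1⟩).val := by
          intro hc
          exact hj (congrArg Fin.val (hinj (Fin.ext hc)))
        exact iv_dv (by omega) hvne
    · -- right inverse
      intro f' hf'
      funext j
      apply Fin.ext
      have hb : (insF n t ht1 f' ⟨t + 1, ht1⟩).val = (f' ⟨t, htn1⟩).val + 1 :=
        insF_val_eq n t ht1 f' ⟨t + 1, ht1⟩ rfl ⟨t, htn1⟩ rfl
      rw [delF_val n t ht1 (insF n t ht1 f') j ⟨sk t j.val, sk_lt ht1 j.isLt⟩ rfl]
      rw [insF_val_ne n t ht1 f' ⟨sk t j.val, sk_lt ht1 j.isLt⟩ sk_ne ⟨t, htn1⟩ rfl j usk_sk.symm]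
      rw [hb]
      exact dv_iv

lemma permFilterCard (n : ℕ) (T : Finset ℕ) :
    (Finset.univ.filter (fun μ : Equiv.Perm (Fin n) => Cst n T ⇑μ)).card
      = (Finset.univ.filter (fun f : Fin n → Fin n => Function.Injective f ∧ Cst n T f)).card := by
  apply Finset.card_bij (fun (μ : Equiv.Perm (Fin n)) _ => ⇑μ)
  · intro μ hμ
    simp only [Finset.mem_filter, Finset.mem_univ, true_and] at hμ ⊢
    exact ⟨μ.injective, hμ⟩
  · intro μ1 _ μ2 _ h
    exact Equiv.coe_fn_injective h
  · intro f hf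
    simp only [Finset.mem_filter, Finset.mem_univ, true_and] at hf
    obtain ⟨hinj, hcst⟩ := hf
    have hbij : Function.Bijective f := (Finite.injective_iff_bijective).mp hinj
    refine ⟨Equiv.ofBijective f hbij, ?_, rfl⟩
    simp only [Finset.mem_filter, Finset.mem_univ, true_and]
    exact hcst

lemma mem_edgeFinset {n : ℕ} (σ : Equiv.Perm (Fin n)) (a b : Fin n) :
    (a, b) ∈ edgeFinset n σ ↔ (σ⁻¹ b).val = (σ⁻¹ a).val + 1 := by
  simp only [edgeFinset, Finset.mem_image, Finset.mem_univ, true_and, Prod.mk.injEq]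
  constructor
  · rintro ⟨i, h1, h2⟩
    have e1 : σ⁻¹ a = ⟨i.1, by have := i.isLt; omega⟩ := (Equiv.symm_apply_eq σ).mpr h1.symm
    have e2 : σ⁻¹ b = ⟨i.1 + 1, by have := i.isLt; omega⟩ := (Equiv.symm_apply_eq σ).mpr h2.symm
    rw [e1, e2]
  · intro h
    have hlt : (σ⁻¹ a).val + 1 < n := by rw [← h]; exact (σ⁻¹ b).isLt
    refine ⟨⟨(σ⁻¹ a).val, by omega⟩, ?_, ?_⟩
    · have e : (⟨(σ⁻¹ a).val, by omega⟩ : Fin n) = σ⁻¹ a := Fin.ext rfl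
      rw [e]; simp
    · have e : (⟨(σ⁻¹ a).val + 1, by omega⟩ : Fin n) = σ⁻¹ b := Fin.ext h.symm
      rw [e]; simp

lemma countSigma (n : ℕ) (π : Equiv.Perm (Fin n)) (S : Finset (Fin n × Fin n))
    (hS : S ⊆ edgeFinset n π) (k : ℕ) (hk : S.card = k) :
    (Finset.univ.filter (fun σ : Equiv.Perm (Fin n) => S ⊆ edgeFinset n σ)).card
      = (n - k).factorial := by
  classical
  -- the edge map of π
  set em : Fin (n - 1) → Fin n × Fin n := fun i =>
    (π ⟨i.1, by have := i.isLt; omega⟩, π ⟨i.1 + 1, by have := i.isLt; omega⟩) with hem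
  have hE : edgeFinset n π = Finset.univ.image em := rfl
  have hem_inj : Function.Injective em := by
    intro i j hij
    have h1 := congrArg Prod.fst hij
    simp only [em] at h1
    have := congrArg Fin.val (π.injective h1)
    exact Fin.ext this
  set Tf : Finset (Fin (n - 1)) := Finset.univ.filter (fun i => em i ∈ S) with hTf
  have hSim : S = Tf.image em := by
    ext e
    simp only [Finset.mem_image, hTf, Finset.mem_filter, Finset.mem_univ, true_and]
    constructor
    · intro he
      have := hS he
      rw [hE] at this
      simp only [Finset.mem_image, Finset.mem_univ, true_and] at this
      obtain ⟨i, hi⟩ := this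
      exact ⟨i, by rw [hi]; exact he, hi⟩
    · rintro ⟨i, hi, rfl⟩
      exact hi
  have hTfcard : Tf.card = k := by
    rw [← hk, hSim, Finset.card_image_of_injective _ hem_inj]
  set T : Finset ℕ := Tf.image Fin.val with hT
  have hTcard : T.card = k := by
    rw [hT, Finset.card_image_of_injective _ Fin.val_injective, hTfcard]
  have hTlt : ∀ i ∈ T, i + 1 < n := by
    intro i hi
    simp only [hT, Finset.mem_image] at hi
    obtain ⟨j, _, rfl⟩ := hi
    have := j.isLt
    omega
  -- condition rewriting
  have key : ∀ σ : Equiv.Perm (Fin n), (S ⊆ edgeFinset n σ) ↔ Cst n T ⇑(σ⁻¹ * π) := by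
    intro σ
    constructor
    · intro hsub i hi h
      simp only [hT, Finset.mem_image, hTf, Finset.mem_filter, Finset.mem_univ, true_and] at hi
      obtain ⟨j, hjS, rfl⟩ := hi
      have := hsub hjS
      rw [hem] at this
      rw [mem_edgeFinset] at this
      simpa using this
    · intro hcst e he
      rw [hSim, Finset.mem_image] at he
      obtain ⟨j, hjTf, rfl⟩ := he
      have hjT : (j : ℕ) ∈ T := by
        simp only [hT, Finset.mem_image]
        exact ⟨j, hjTf, rfl⟩
      have hj1 : (j : ℕ) + 1 < n := by have := j.isLt; omega
      have := hcst j.val hjT hj1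
      rw [hem, mem_edgeFinset]
      simpa using this
  calc (Finset.univ.filter (fun σ : Equiv.Perm (Fin n) => S ⊆ edgeFinset n σ)).card
      = (Finset.univ.filter (fun μ : Equiv.Perm (Fin n) => Cst n T ⇑μ)).card := by
        apply Finset.card_bij' (fun σ _ => σ⁻¹ * π) (fun μ _ => π * μ⁻¹)
        · intro σ hσ
          simp only [Finset.mem_filter, Finset.mem_univ, true_and] at hσ ⊢
          exact (key σ).mp hσ
        · intro μ hμ
          simp only [Finset.mem_filter, Finset.mem_univ, true_and] at hμ ⊢
          rw [key]
          simpa [mul_assoc] using hμ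
        · intro σ _; group
        · intro μ _; group
    _ = (n - k).factorial := by rw [permFilterCard, countInj k n T hTlt hTcard]

lemma card_edgeFinset (n : ℕ) (π : Equiv.Perm (Fin n)) : (edgeFinset n π).card = n - 1 := by
  have hem_inj : Function.Injective (fun i : Fin (n - 1) =>
      (π ⟨i.1, by have := i.isLt; omega⟩, π ⟨i.1 + 1, by have := i.isLt; omega⟩)) := by
    intro i j hij
    have h1 := congrArg Prod.fst hij
    simp only at h1
    have := congrArg Fin.val (π.injective h1)
    exact Fin.ext this
  rw [edgeFinset, Finset.card_image_of_injective _ hem_inj, Finset.card_univ, Fintype.card_fin]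

/-- Fix `n ≥ 1` and `0 ≤ k ≤ n−1`. For `π, σ` independent uniform
permutations of `[n]` and `Z = |E(π) ∩ E(σ)|`, one has `𝔼[C(Z,k)] = ((n−k)/n)·(1/k!)`;
equivalently, for any fixed `π` and any `k`-element `S ⊆ E(π)`, the probability that
`S ⊆ E(σ)` for uniform `σ` is `(n−k)!/n!`. -/
theorem stmt18 (n : ℕ) (hn : 1 ≤ n) (k : ℕ) (hk : k ≤ n - 1) :
    ((∑ π : Equiv.Perm (Fin n), ∑ σ : Equiv.Perm (Fin n),
        (((edgeFinset n π ∩ edgeFinset n σ).card.choose k : ℝ))) /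
          ((n.factorial : ℝ) * (n.factorial : ℝ)) =
      (((n : ℝ) - k) / (n : ℝ)) * (1 / (k.factorial : ℝ))) ∧
    (∀ π : Equiv.Perm (Fin n), ∀ S ⊆ edgeFinset n π, S.card = k →
      (((Finset.univ.filter (fun σ : Equiv.Perm (Fin n) => S ⊆ edgeFinset n σ)).card : ℝ) /
          (n.factorial : ℝ) =
        ((n - k).factorial : ℝ) / (n.factorial : ℝ))) := by
  constructor
  · -- expectation
    have hinner : ∀ π : Equiv.Perm (Fin n),
        (∑ σ : Equiv.Perm (Fin n), (edgeFinset n π ∩ edgeFinset n σ).card.choose k)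
          = (n - 1).choose k * (n - k).factorial := by
      intro π
      have h1 : ∀ σ : Equiv.Perm (Fin n),
          (edgeFinset n π ∩ edgeFinset n σ).card.choose k
            = ((Finset.powersetCard k (edgeFinset n π)).filter
                (fun S => S ⊆ edgeFinset n σ)).card := by
        intro σ
        rw [← Finset.card_powersetCard]
        congr 1
        ext S
        simp only [Finset.mem_powersetCard, Finset.mem_filter, Finset.subset_inter_iff]
        tauto
      calc (∑ σ : Equiv.Perm (Fin n), (edgeFinset n π ∩ edgeFinset n σ).card.choose k)
          = ∑ σ : Equiv.Perm (Fin n), ∑ S ∈ Finset.powersetCard k (edgeFinset n π),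
              if S ⊆ edgeFinset n σ then 1 else 0 := by
            refine Finset.sum_congr rfl fun σ _ => ?_
            rw [h1 σ, Finset.card_filter]
        _ = ∑ S ∈ Finset.powersetCard k (edgeFinset n π), ∑ σ : Equiv.Perm (Fin n),
              if S ⊆ edgeFinset n σ then 1 else 0 := Finset.sum_comm
        _ = ∑ S ∈ Finset.powersetCard k (edgeFinset n π), (n - k).factorial := by
            refine Finset.sum_congr rfl fun S hS => ?_
            rw [Finset.mem_powersetCard] at hS
            rw [← Finset.card_filter]
            exact countSigma n π S hS.1 k hS.2
        _ = (n - 1).choose k * (n - k).factorial := by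
            rw [Finset.sum_const, Finset.card_powersetCard, card_edgeFinset, smul_eq_mul]
    have htot : (∑ π : Equiv.Perm (Fin n), ∑ σ : Equiv.Perm (Fin n),
        (edgeFinset n π ∩ edgeFinset n σ).card.choose k)
          = n.factorial * ((n - 1).choose k * (n - k).factorial) := by
      rw [Finset.sum_congr rfl (fun π _ => hinner π), Finset.sum_const, Finset.card_univ,
        Fintype.card_perm, Fintype.card_fin, smul_eq_mul]
    have hcastsum : (∑ π : Equiv.Perm (Fin n), ∑ σ : Equiv.Perm (Fin n),
        (((edgeFinset n π ∩ edgeFinset n σ).card.choose k : ℝ)))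
          = ((n.factorial * ((n - 1).choose k * (n - k).factorial) : ℕ) : ℝ) := by
      rw [← htot]
      push_cast
      rfl
    rw [hcastsum]
    have key : (n - 1).choose k * (n - k).factorial * k.factorial * n
        = (n - k) * n.factorial := by
      have h1 : (n - 1).choose k * k.factorial * (n - 1 - k).factorial = (n - 1).factorial :=
        Nat.choose_mul_factorial_mul_factorial hk
      have h2 : (n - k).factorial = (n - k) * (n - 1 - k).factorial := by
        rw [show n - k = (n - 1 - k) + 1 from by omega, Nat.factorial_succ]
      rw [h2, ← Nat.mul_factorial_pred (show n ≠ 0 by omega), ← h1]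
      ring
    have hnne : (n : ℝ) ≠ 0 := by positivity
    have hfacne : (n.factorial : ℝ) ≠ 0 := by positivity
    have hkfacne : (k.factorial : ℝ) ≠ 0 := by positivity
    rw [show ((n : ℝ) - k) = ((n - k : ℕ) : ℝ) from (Nat.cast_sub (by omega)).symm]
    field_simp
    have keyR : ((n - 1).choose k : ℝ) * (n - k).factorial * k.factorial * n
        = ((n - k : ℕ) : ℝ) * n.factorial := by exact_mod_cast key
    push_cast
    linear_combination (n.factorial : ℝ) * keyR
  · -- probability
    intro π S hS hcard
    rw [countSigma n π S hS k hcard]
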